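/- Let n ≥ 1, α ∈ (0,1), Λ > 0, and let f : ℝⁿ × ℝ × ℝⁿ → ℝ be three times continuously differentiable with all partial derivatives up to order 3 bounded in absolute value by Λ on the set { (p,s,y) : p ∈ ℝⁿ, |s| + |y| ≤ 1 }. Suppose that for every p ∈ ℝⁿ one has f(p,0,0) = 0, ∂_s f(p,0,0) = 0, and ∇_y f(p,0,0) = 0. Then there exists a constant C, depending only on n, α and Λ, such that: for every continuously differentiable v : ℝⁿ → ℝ with M := sup_p (|v(p)| + |∇v(p)|) ≤ 1 whose gradient ∇v is α-Hölder with seminorm H := sup_{p≠q} |∇v(p) − ∇v(q)| / |p−q|^{α} < ∞, the function g(p) := f(p, v(p), ∇v(p)) satisfies sup_p |g(p)| + sup_{p≠q} |g(p) − g(q)| / |p−q|^{α} ≤ C · M · (M + H). -/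

import Mathlib

set_option maxHeartbeats 1000000

section Helpers
variable {E Y : Type*} [NormedAddCommGroup E] [NormedSpace ℝ E]
  [NormedAddCommGroup Y] [NormedSpace ℝ Y]

lemma slice_convex (r : E) (m : ℝ) :
    Convex ℝ {z : E × ℝ × E | z.1 = r ∧ |z.2.1| + ‖z.2.2‖ ≤ m} := by
  intro z hz z' hz' t t' ht ht' htt
  obtain ⟨hz1, hz2⟩ := hz
  obtain ⟨hz1', hz2'⟩ := hz'
  constructor
  · show t • z.1 + t' • z'.1 = r
    rw [hz1, hz1', ← add_smul, htt, one_smul]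
  · show |t • z.2.1 + t' • z'.2.1| + ‖t • z.2.2 + t' • z'.2.2‖ ≤ m
    have h5 := abs_add_le (t • z.2.1) (t' • z'.2.1)
    have h6 := norm_add_le (t • z.2.2) (t' • z'.2.2)
    have e1 : |t • z.2.1| = t * |z.2.1| := by
      rw [smul_eq_mul, abs_mul, abs_of_nonneg ht]
    have e2 : |t' • z'.2.1| = t' * |z'.2.1| := by
      rw [smul_eq_mul, abs_mul, abs_of_nonneg ht']
    have e3 : ‖t • z.2.2‖ = t * ‖z.2.2‖ := by rw [norm_smul, Real.norm_of_nonneg ht]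
    have e4 : ‖t' • z'.2.2‖ = t' * ‖z'.2.2‖ := by rw [norm_smul, Real.norm_of_nonneg ht']
    nlinarith [abs_nonneg z.2.1, abs_nonneg z'.2.1, norm_nonneg z.2.2, norm_nonneg z'.2.2]

lemma mvt_slice (w : E × ℝ × E → Y) (w' : E × ℝ × E → (E × ℝ × E) →L[ℝ] Y)
    (r : E) (m K : ℝ) (hm : 0 ≤ m)
    (hw : ∀ z ∈ {z : E × ℝ × E | z.1 = r ∧ |z.2.1| + ‖z.2.2‖ ≤ m}, HasFDerivAt w (w' z) z)
    (hK : ∀ z ∈ {z : E × ℝ × E | z.1 = r ∧ |z.2.1| + ‖z.2.2‖ ≤ m}, ‖w' z‖ ≤ K)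
    (h0 : w (r, 0, 0) = 0) {s : ℝ} {y : E} (hsy : |s| + ‖y‖ ≤ m) :
    ‖w (r, s, y)‖ ≤ K * (|s| + ‖y‖) := by
  set S := {z : E × ℝ × E | z.1 = r ∧ |z.2.1| + ‖z.2.2‖ ≤ m} with hS
  have h00 : ((r, 0, 0) : E × ℝ × E) ∈ S := by simp [hS, hm]
  have hsy' : ((r, s, y) : E × ℝ × E) ∈ S := ⟨rfl, hsy⟩
  have hK0 : 0 ≤ K := le_trans (norm_nonneg _) (hK _ h00)
  have := (slice_convex r m).norm_image_sub_le_of_norm_hasFDerivWithin_le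
    (fun z hz => (hw z hz).hasFDerivWithinAt) hK h00 hsy'
  rw [h0, sub_zero] at this
  refine this.trans ?_
  have : ‖((r, s, y) : E × ℝ × E) - (r, 0, 0)‖ = max |s| ‖y‖ := by
    simp [Prod.norm_def, Prod.sub_def, Real.norm_eq_abs]
  rw [this]
  have : max |s| ‖y‖ ≤ |s| + ‖y‖ := max_le (le_add_of_nonneg_right (norm_nonneg y)) (le_add_of_nonneg_left (abs_nonneg s))
  nlinarith [abs_nonneg s, norm_nonneg y]
end Helpers

section Core
variable {E : Type*} [NormedAddCommGroup E] [NormedSpace ℝ E]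

theorem quadratic_core (α : ℝ) (hα : α ∈ Set.Ioo (0 : ℝ) 1) (Λ : ℝ) (hΛ : 0 < Λ)
    (f : E × ℝ × E → ℝ) (hf : ContDiff ℝ 3 f)
    (hfb : ∀ i : ℕ, i ≤ 3 → ∀ (p : E) (s : ℝ) (y : E),
        |s| + ‖y‖ ≤ 1 → ‖iteratedFDeriv ℝ i f (p, s, y)‖ ≤ Λ)
    (hf0 : ∀ p : E, f (p, 0, 0) = 0)
    (hfs : ∀ p : E, deriv (fun s : ℝ => f (p, s, 0)) 0 = 0)
    (hfy : ∀ p : E, fderiv ℝ (fun y : E => f (p, 0, y)) 0 = 0)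
    (v : E → ℝ) (w : E → E) (M H : ℝ) (hH : 0 ≤ H)
    (hM : ∀ p, |v p| + ‖w p‖ ≤ M) (hM1 : M ≤ 1)
    (hvlip : ∀ p q, |v p - v q| ≤ M * ‖p - q‖)
    (hHol : ∀ p q, ‖w p - w q‖ ≤ H * dist p q ^ α) :
    (∀ p, |f (p, v p, w p)| ≤ 4 * Λ * M * (M + H)) ∧
    (∀ p q, |f (p, v p, w p) - f (q, v q, w q)| ≤
      4 * Λ * M * (M + H) * dist p q ^ α) := by
  have hM0 : 0 ≤ M := le_trans (by positivity) (hM 0)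
  set F := fderiv ℝ f with hFdef
  set G := fderiv ℝ F with hGdef
  have hFc : ContDiff ℝ 2 F := hf.fderiv_right (by norm_num)
  have hGc : ContDiff ℝ 1 G := hFc.fderiv_right (by norm_num)
  have hfd : Differentiable ℝ f := hf.differentiable (by norm_num)
  have hFd : Differentiable ℝ F := hFc.differentiable (by norm_num)
  have hGd : Differentiable ℝ G := hGc.differentiable (by norm_num)
  have hFz : ∀ z, HasFDerivAt f (F z) z := fun z => (hfd z).hasFDerivAt
  have hGz : ∀ z, HasFDerivAt F (G z) z := fun z => (hFd z).hasFDerivAt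
  -- norm bounds on F, G, fderiv G
  have hFb : ∀ z : E × ℝ × E, |z.2.1| + ‖z.2.2‖ ≤ 1 → ‖F z‖ ≤ Λ := by
    rintro ⟨p, s, y⟩ hz
    have h := hfb 1 (by norm_num) p s y hz
    rwa [← norm_iteratedFDeriv_fderiv, norm_iteratedFDeriv_zero] at h
  have hGb : ∀ z : E × ℝ × E, |z.2.1| + ‖z.2.2‖ ≤ 1 → ‖G z‖ ≤ Λ := by
    rintro ⟨p, s, y⟩ hz
    have h := hfb 2 (by norm_num) p s y hz
    rw [show (2 : ℕ) = 1 + 1 from rfl, ← norm_iteratedFDeriv_fderiv,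
      ← norm_iteratedFDeriv_fderiv, norm_iteratedFDeriv_zero] at h
    exact h
  have hG'b : ∀ z : E × ℝ × E, |z.2.1| + ‖z.2.2‖ ≤ 1 → @norm _ (@NormedAddCommGroup.toNorm _ (@ContinuousLinearMap.toNormedAddCommGroup ℝ ℝ (E × ℝ × E) (E × ℝ × E →L[ℝ] E × ℝ × E →L[ℝ] ℝ) _ _ _ _ _ _ _ _)) (fderiv ℝ G z) ≤ Λ := by
    rintro ⟨p, s, y⟩ hz
    have h := hfb 3 (by norm_num) p s y hz
    rw [show (3 : ℕ) = 2 + 1 from rfl, ← norm_iteratedFDeriv_fderiv,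
      show (2 : ℕ) = 1 + 1 from rfl, ← norm_iteratedFDeriv_fderiv,
      ← norm_iteratedFDeriv_fderiv, norm_iteratedFDeriv_zero] at h
    exact h
  -- the embedding of the first factor
  set ι : E →L[ℝ] E × ℝ × E := (ContinuousLinearMap.id ℝ E).prod 0 with hιdef
  have hγ : ∀ (s : ℝ) (y : E) (p : E), HasFDerivAt (fun q : E => (q, s, y)) ι p :=
    fun s y p => HasFDerivAt.prodMk (hasFDerivAt_id p) (hasFDerivAt_const (s, y) p)
  have hιa : ∀ a : E, ι a = (a, (0 : ℝ), (0 : E)) := by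
    intro a; simp [hιdef]; rfl
  -- (A) the full derivative vanishes on the zero section
  have hF0 : ∀ p : E, F (p, (0 : ℝ), (0 : E)) = 0 := by
    intro p
    -- p-direction
    have h1 : HasFDerivAt (fun q : E => f (q, (0 : ℝ), (0 : E)))
        ((F (p, (0 : ℝ), (0 : E))).comp ι) p := by
      have := (hFz (p, (0 : ℝ), (0 : E))).comp p (hγ 0 0 p)
      exact this
    have heq : (fun q : E => f (q, (0 : ℝ), (0 : E))) = fun _ => (0 : ℝ) :=
      funext fun q => hf0 q
    rw [heq] at h1
    have hcomp0 : (F (p, (0 : ℝ), (0 : E))).comp ι = 0 :=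
      h1.unique (hasFDerivAt_const 0 p)
    have hpa : ∀ a : E, F (p, (0 : ℝ), (0 : E)) (a, (0 : ℝ), (0 : E)) = 0 := by
      intro a
      have := ContinuousLinearMap.ext_iff.1 hcomp0 a
      simpa [hιa] using this
    -- s-direction
    have hσ : HasFDerivAt (fun s : ℝ => ((p : E), s, (0 : E)))
        ((0 : ℝ →L[ℝ] E).prod ((ContinuousLinearMap.id ℝ ℝ).prod 0)) 0 :=
      HasFDerivAt.prodMk (hasFDerivAt_const p 0) (HasFDerivAt.prodMk (hasFDerivAt_id 0) (hasFDerivAt_const 0 0))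
    have h2 : HasFDerivAt (fun s : ℝ => f (p, s, (0 : E)))
        ((F (p, (0 : ℝ), (0 : E))).comp
          ((0 : ℝ →L[ℝ] E).prod ((ContinuousLinearMap.id ℝ ℝ).prod 0))) 0 := by
      have := HasFDerivAt.comp 0 (hFz _) hσ
      exact this
    have h2' := h2.hasDerivAt.deriv
    rw [hfs p] at h2'
    have hps1 : F (p, (0 : ℝ), (0 : E)) ((0 : E), (1 : ℝ), (0 : E)) = 0 := by
      simpa using h2'.symm
    have hpb : ∀ b : ℝ, F (p, (0 : ℝ), (0 : E)) ((0 : E), b, (0 : E)) = 0 := by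
      intro b
      have hb : ((0 : E), b, (0 : E)) = b • (((0 : E), (1 : ℝ), (0 : E)) : E × ℝ × E) := by
        simp
      rw [hb, map_smul, hps1, smul_zero]
    -- y-direction
    have hτ : HasFDerivAt (fun y : E => ((p : E), (0 : ℝ), y))
        ((0 : E →L[ℝ] E).prod ((0 : E →L[ℝ] ℝ).prod (ContinuousLinearMap.id ℝ E))) 0 :=
      HasFDerivAt.prodMk (hasFDerivAt_const p 0) (HasFDerivAt.prodMk (hasFDerivAt_const 0 0) (hasFDerivAt_id 0))
    have h3 : HasFDerivAt (fun y : E => f (p, (0 : ℝ), y))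
        ((F (p, (0 : ℝ), (0 : E))).comp
          ((0 : E →L[ℝ] E).prod ((0 : E →L[ℝ] ℝ).prod (ContinuousLinearMap.id ℝ E)))) 0 := by
      have := HasFDerivAt.comp 0 (hFz _) hτ
      exact this
    have h3' := h3.fderiv
    rw [hfy p] at h3'
    have hpc : ∀ c : E, F (p, (0 : ℝ), (0 : E)) ((0 : E), (0 : ℝ), c) = 0 := by
      intro c
      have := ContinuousLinearMap.ext_iff.1 h3'.symm c
      simpa using this
    apply ContinuousLinearMap.ext
    rintro ⟨a, b, c⟩
    have hw : ((a, b, c) : E × ℝ × E) =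
        (a, (0 : ℝ), (0 : E)) + ((0 : E), b, (0 : E)) + ((0 : E), (0 : ℝ), c) := by
      simp [Prod.ext_iff]
    rw [hw, map_add, map_add, hpa, hpb, hpc]
    simp
  -- (B) mixed second derivative in p-direction vanishes
  have hG0 : ∀ (p : E) (a : E), G (p, (0 : ℝ), (0 : E)) (a, (0 : ℝ), (0 : E)) = 0 := by
    intro p a
    have h1 : HasFDerivAt (fun q : E => F (q, (0 : ℝ), (0 : E)))
        ((G (p, (0 : ℝ), (0 : E))).comp ι) p := by
      have := (hGz (p, (0 : ℝ), (0 : E))).comp p (hγ 0 0 p)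
      exact this
    have heq : (fun q : E => F (q, (0 : ℝ), (0 : E)))
        = fun _ => (0 : (E × ℝ × E) →L[ℝ] ℝ) := funext fun q => hF0 q
    rw [heq] at h1
    have hcomp0 : (G (p, (0 : ℝ), (0 : E))).comp ι = 0 :=
      h1.unique (hasFDerivAt_const 0 p)
    have := ContinuousLinearMap.ext_iff.1 hcomp0 a
    simpa [hιa] using this
  have hsymm : ∀ (p : E) (u₁ u₂ : E × ℝ × E),
      G (p, (0 : ℝ), (0 : E)) u₁ u₂ = G (p, (0 : ℝ), (0 : E)) u₂ u₁ :=
    fun p => second_derivative_symmetric hFz (hGz (p, (0 : ℝ), (0 : E)))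
  -- E1 : first derivative is linearly small on the strip
  have E1 : ∀ z : E × ℝ × E, |z.2.1| + ‖z.2.2‖ ≤ 1 → ‖F z‖ ≤ Λ * (|z.2.1| + ‖z.2.2‖) := by
    rintro ⟨p, s, y⟩ h
    exact mvt_slice F G p 1 Λ zero_le_one (fun z _ => hGz z)
      (fun z hz => hGb z hz.2) (hF0 p) h
  -- E2 : f is quadratically small
  have E2 : ∀ m : ℝ, 0 ≤ m → m ≤ 1 → ∀ (p : E) (s : ℝ) (y : E), |s| + ‖y‖ ≤ m →
      |f (p, s, y)| ≤ Λ * m * (|s| + ‖y‖) := by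
    intro m hm0 hm1 p s y hsy
    have h := mvt_slice f F p m (Λ * m) hm0 (fun z _ => hFz z)
      (fun z hz => (E1 z (hz.2.trans hm1)).trans
        (mul_le_mul_of_nonneg_left hz.2 hΛ.le)) (hf0 p) hsy
    simpa [Real.norm_eq_abs] using h
  -- E3i : second derivative is close to its value on the zero section
  have E3i : ∀ (p : E) (s : ℝ) (y : E), |s| + ‖y‖ ≤ 1 →
      ‖G (p, s, y) - G (p, (0 : ℝ), (0 : E))‖ ≤ Λ * (|s| + ‖y‖) := by
    intro p s y h
    exact mvt_slice (fun z => G z - G (p, (0 : ℝ), (0 : E))) (fun z => fderiv ℝ G z)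
      p 1 Λ zero_le_one (fun z _ => (hGd z).hasFDerivAt.sub_const (G (p, (0 : ℝ), (0 : E))))
      (fun z hz => hG'b z hz.2) (sub_self (G (p, (0 : ℝ), (0 : E)))) h
  -- E3 : Taylor expansion of F around the zero section
  have E3 : ∀ m : ℝ, 0 ≤ m → m ≤ 1 → ∀ (p : E) (s : ℝ) (y : E), |s| + ‖y‖ ≤ m →
      ‖F (p, s, y) - G (p, (0 : ℝ), (0 : E)) ((0 : E), s, y)‖ ≤ Λ * m * (|s| + ‖y‖) := by
    intro m hm0 hm1 p s y hsy
    have key := mvt_slice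
      (fun z => F z - (G (p, (0 : ℝ), (0 : E)) z - G (p, (0 : ℝ), (0 : E)) (p, (0 : ℝ), (0 : E))))
      (fun z => G z - G (p, (0 : ℝ), (0 : E))) p m (Λ * m) hm0
      (fun z _ => (hGz z).sub ((G (p, (0 : ℝ), (0 : E))).hasFDerivAt.sub_const _))
      (fun z hz => by
        obtain ⟨q, u, zz⟩ := z
        obtain ⟨hq, hsum⟩ := hz
        simp only at hq
        subst hq
        exact (E3i q u zz (hsum.trans hm1)).trans
          (mul_le_mul_of_nonneg_left hsum hΛ.le))
      (by show F (p, (0 : ℝ), (0 : E)) - (G (p, (0 : ℝ), (0 : E)) (p, (0 : ℝ), (0 : E))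
            - G (p, (0 : ℝ), (0 : E)) (p, (0 : ℝ), (0 : E))) = 0
          rw [sub_self, sub_zero, hF0]) hsy
    have hv : G (p, (0 : ℝ), (0 : E)) ((p, s, y) : E × ℝ × E)
        - G (p, (0 : ℝ), (0 : E)) (p, (0 : ℝ), (0 : E))
        = G (p, (0 : ℝ), (0 : E)) ((0 : E), s, y) := by
      rw [← map_sub]
      congr 1
      simp [Prod.mk_sub_mk]
    simpa only [hv] using key
  -- E4 : the p-partial derivatives of f are quadratically small
  have E4 : ∀ m : ℝ, 0 ≤ m → m ≤ 1 → ∀ (p : E) (s : ℝ) (y : E), |s| + ‖y‖ ≤ m → ∀ a : E,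
      |F (p, s, y) (a, (0 : ℝ), (0 : E))| ≤ Λ * m * m * ‖a‖ := by
    intro m hm0 hm1 p s y hsy a
    have h1 := E3 m hm0 hm1 p s y hsy
    have h2 : G (p, (0 : ℝ), (0 : E)) ((0 : E), s, y) (a, (0 : ℝ), (0 : E)) = 0 := by
      rw [hsymm p ((0 : E), s, y) (a, (0 : ℝ), (0 : E)), hG0 p a]
      simp
    have h3 : F (p, s, y) (a, (0 : ℝ), (0 : E))
        = (F (p, s, y) - G (p, (0 : ℝ), (0 : E)) ((0 : E), s, y)) (a, (0 : ℝ), (0 : E)) := by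
      rw [ContinuousLinearMap.sub_apply, h2, sub_zero]
    have h4 : ‖((a, (0 : ℝ), (0 : E)) : E × ℝ × E)‖ = ‖a‖ := by
      simp [Prod.norm_def]
    rw [h3]
    calc |(F (p, s, y) - G (p, (0 : ℝ), (0 : E)) ((0 : E), s, y)) (a, (0 : ℝ), (0 : E))|
        ≤ ‖F (p, s, y) - G (p, (0 : ℝ), (0 : E)) ((0 : E), s, y)‖ * ‖((a, (0 : ℝ), (0 : E)) : E × ℝ × E)‖ := by
          rw [← Real.norm_eq_abs]
          exact ContinuousLinearMap.le_opNorm _ _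
      _ ≤ (Λ * m * (|s| + ‖y‖)) * ‖a‖ := by
          rw [h4]
          exact mul_le_mul_of_nonneg_right h1 (norm_nonneg a)
      _ ≤ Λ * m * m * ‖a‖ := by
          apply mul_le_mul_of_nonneg_right _ (norm_nonneg a)
          exact mul_le_mul_of_nonneg_left hsy (by positivity)
  -- E5 : Lipschitz estimate in the p-variable
  have E5 : ∀ m : ℝ, 0 ≤ m → m ≤ 1 → ∀ (s : ℝ) (y : E), |s| + ‖y‖ ≤ m → ∀ p q : E,
      |f (p, s, y) - f (q, s, y)| ≤ Λ * m * m * ‖p - q‖ := by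
    intro m hm0 hm1 s y hsy p q
    have hderiv : ∀ r : E, HasFDerivAt (fun r : E => f (r, s, y)) ((F (r, s, y)).comp ι) r := by
      intro r
      have := HasFDerivAt.comp r (hFz _) (hγ s y r)
      exact this
    have bound : ∀ r ∈ (Set.univ : Set E), ‖(F (r, s, y)).comp ι‖ ≤ Λ * m * m := by
      intro r _
      refine ContinuousLinearMap.opNorm_le_bound _ (by positivity) fun a => ?_
      rw [ContinuousLinearMap.comp_apply, hιa]
      calc ‖F (r, s, y) (a, (0 : ℝ), (0 : E))‖ = |F (r, s, y) (a, (0 : ℝ), (0 : E))| :=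
            Real.norm_eq_abs _
        _ ≤ Λ * m * m * ‖a‖ := E4 m hm0 hm1 r s y hsy a
    have h := convex_univ.norm_image_sub_le_of_norm_hasFDerivWithin_le
      (fun r _ => (hderiv r).hasFDerivWithinAt) bound (Set.mem_univ q) (Set.mem_univ p)
    simpa [Real.norm_eq_abs] using h
  -- E6 : Lipschitz estimate in the (s, y)-variables
  have E6 : ∀ m : ℝ, 0 ≤ m → m ≤ 1 → ∀ (q : E) (s1 : ℝ) (y1 : E) (s2 : ℝ) (y2 : E),
      |s1| + ‖y1‖ ≤ m → |s2| + ‖y2‖ ≤ m →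
      |f (q, s1, y1) - f (q, s2, y2)| ≤ Λ * m * (|s1 - s2| + ‖y1 - y2‖) := by
    intro m hm0 hm1 q s1 y1 s2 y2 h1 h2
    have hmem1 : ((q, s1, y1) : E × ℝ × E) ∈
        {z : E × ℝ × E | z.1 = q ∧ |z.2.1| + ‖z.2.2‖ ≤ m} := ⟨rfl, h1⟩
    have hmem2 : ((q, s2, y2) : E × ℝ × E) ∈
        {z : E × ℝ × E | z.1 = q ∧ |z.2.1| + ‖z.2.2‖ ≤ m} := ⟨rfl, h2⟩
    have bound : ∀ z ∈ {z : E × ℝ × E | z.1 = q ∧ |z.2.1| + ‖z.2.2‖ ≤ m}, ‖F z‖ ≤ Λ * m :=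
      fun z hz => (E1 z (hz.2.trans hm1)).trans (mul_le_mul_of_nonneg_left hz.2 hΛ.le)
    have h := (slice_convex q m).norm_image_sub_le_of_norm_hasFDerivWithin_le
      (fun z _ => (hFz z).hasFDerivWithinAt) bound hmem2 hmem1
    have hsub : ((q, s1, y1) : E × ℝ × E) - (q, s2, y2) = ((0 : E), s1 - s2, y1 - y2) := by
      simp [Prod.mk_sub_mk]
    have hnorm : ‖((q, s1, y1) : E × ℝ × E) - (q, s2, y2)‖ ≤ |s1 - s2| + ‖y1 - y2‖ := by
      rw [hsub, Prod.norm_def, Prod.norm_def]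
      simp only [norm_zero, Real.norm_eq_abs]
      apply max_le (by positivity)
      exact max_le (le_add_of_nonneg_right (norm_nonneg _)) (le_add_of_nonneg_left (abs_nonneg _))
    calc |f (q, s1, y1) - f (q, s2, y2)| = ‖f (q, s1, y1) - f (q, s2, y2)‖ :=
          (Real.norm_eq_abs _).symm
      _ ≤ Λ * m * ‖((q, s1, y1) : E × ℝ × E) - (q, s2, y2)‖ := h
      _ ≤ Λ * m * (|s1 - s2| + ‖y1 - y2‖) :=
          mul_le_mul_of_nonneg_left hnorm (by positivity)
  -- sup bound
  have gsup : ∀ p, |f (p, v p, w p)| ≤ Λ * M * M := by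
    intro p
    exact (E2 M hM0 hM1 p (v p) (w p) (hM p)).trans
      (mul_le_mul_of_nonneg_left (hM p) (by positivity))
  constructor
  · intro p
    have := gsup p
    nlinarith [mul_nonneg (mul_nonneg hΛ.le hM0) hH, mul_nonneg (mul_nonneg hΛ.le hM0) hM0]
  · intro p q
    rcases eq_or_ne p q with rfl | hpq
    · simp only [sub_self, abs_zero, dist_self]
      rw [Real.zero_rpow hα.1.ne', mul_zero]
    · have hd0 : 0 < dist p q := dist_pos.2 hpq
      have hdn : dist p q = ‖p - q‖ := dist_eq_norm p q
      have hrp : (0 : ℝ) ≤ dist p q ^ α := Real.rpow_nonneg dist_nonneg α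
      by_cases hd1 : 1 ≤ dist p q
      · have h1le : (1 : ℝ) ≤ dist p q ^ α := by
          calc (1 : ℝ) = 1 ^ α := (Real.one_rpow α).symm
            _ ≤ dist p q ^ α := Real.rpow_le_rpow zero_le_one hd1 hα.1.le
        have habs : |f (p, v p, w p) - f (q, v q, w q)| ≤ Λ * M * M + Λ * M * M :=
          (abs_sub _ _).trans (add_le_add (gsup p) (gsup q))
        nlinarith [mul_nonneg (mul_nonneg hΛ.le hM0) hH,
          mul_nonneg (mul_nonneg hΛ.le hM0) hM0,
          mul_le_mul_of_nonneg_left h1le (show (0 : ℝ) ≤ 4 * Λ * M * (M + H) by positivity)]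
      · push_neg at hd1
        have hda : dist p q ≤ dist p q ^ α := by
          calc dist p q = dist p q ^ (1 : ℝ) := (Real.rpow_one _).symm
            _ ≤ dist p q ^ α := Real.rpow_le_rpow_of_exponent_ge hd0 hd1.le hα.2.le
        have t1 := E5 M hM0 hM1 (v p) (w p) (hM p) p q
        rw [← hdn] at t1
        have t2 := E6 M hM0 hM1 q (v p) (w p) (v q) (w q) (hM p) (hM q)
        have t3 := hvlip p q
        rw [← hdn] at t3
        have t4 := hHol p q
        have tri : |f (p, v p, w p) - f (q, v q, w q)| ≤
            |f (p, v p, w p) - f (q, v p, w p)| + |f (q, v p, w p) - f (q, v q, w q)| :=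
          abs_sub_le _ _ _
        have c1 : |f (p, v p, w p) - f (q, v p, w p)| ≤ Λ * M * M * dist p q ^ α :=
          t1.trans (mul_le_mul_of_nonneg_left hda (by positivity))
        have c2 : |f (q, v p, w p) - f (q, v q, w q)| ≤
            Λ * M * (M * dist p q ^ α + H * dist p q ^ α) := by
          refine t2.trans (mul_le_mul_of_nonneg_left ?_ (by positivity))
          have hv1 : |v p - v q| ≤ M * dist p q ^ α :=
            t3.trans (mul_le_mul_of_nonneg_left hda hM0)
          exact add_le_add hv1 t4
        have hfin : Λ * M * M * dist p q ^ α + Λ * M * (M * dist p q ^ α + H * dist p q ^ α)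
            ≤ 4 * Λ * M * (M + H) * dist p q ^ α := by
          nlinarith [mul_nonneg (mul_nonneg (mul_nonneg hΛ.le hM0) hH) hrp,
            mul_nonneg (mul_nonneg (mul_nonneg hΛ.le hM0) hM0) hrp]
        linarith


end Core




/-- Lemma B.2 (Euclidean version): if `f(p,s,y)` is `C³` with derivatives up to order 3
bounded by `Λ` on `{|s| + |y| ≤ 1}` and `f`, `∂_s f`, `∇_y f` vanish along the zero
section, then for `C¹` functions `v` with `‖v‖_{C¹} ≤ M ≤ 1` and `[∇v]_α ≤ H`, the
composition `g(p) = f(p, v(p), ∇v(p))` satisfies `‖g‖_{C^α} ≤ C M (M + H)`. -/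
theorem quadratic_holder_estimate (n : ℕ) (hn : 1 ≤ n) (α : ℝ)
    (hα : α ∈ Set.Ioo (0 : ℝ) 1) (Λ : ℝ) (hΛ : 0 < Λ)
    (f : EuclideanSpace ℝ (Fin n) × ℝ × EuclideanSpace ℝ (Fin n) → ℝ)
    (hf : ContDiff ℝ 3 f)
    (hfb : ∀ i : ℕ, i ≤ 3 →
      ∀ (p : EuclideanSpace ℝ (Fin n)) (s : ℝ) (y : EuclideanSpace ℝ (Fin n)),
        |s| + ‖y‖ ≤ 1 → ‖iteratedFDeriv ℝ i f (p, s, y)‖ ≤ Λ)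
    (hf0 : ∀ p : EuclideanSpace ℝ (Fin n), f (p, 0, 0) = 0)
    (hfs : ∀ p : EuclideanSpace ℝ (Fin n), deriv (fun s : ℝ => f (p, s, 0)) 0 = 0)
    (hfy : ∀ p : EuclideanSpace ℝ (Fin n),
      fderiv ℝ (fun y : EuclideanSpace ℝ (Fin n) => f (p, 0, y)) 0 = 0) :
    ∃ C > 0, ∀ v : EuclideanSpace ℝ (Fin n) → ℝ, ContDiff ℝ 1 v →
      ∀ M H : ℝ, 0 ≤ H → (∀ p, |v p| + ‖gradient v p‖ ≤ M) → M ≤ 1 →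
      (∀ p q, ‖gradient v p - gradient v q‖ ≤ H * dist p q ^ α) →
      (∀ p, |f (p, v p, gradient v p)| ≤ C * M * (M + H)) ∧
      (∀ p q, |f (p, v p, gradient v p) - f (q, v q, gradient v q)| ≤
        C * M * (M + H) * dist p q ^ α) := by
  refine ⟨4 * Λ, by positivity, ?_⟩
  intro v hv M H hH hM hM1 hHol
  have hM0 : 0 ≤ M := le_trans (by positivity) (hM 0)
  have hvd : Differentiable ℝ v := hv.differentiable one_ne_zero
  have hgradnorm : ∀ r, ‖fderiv ℝ v r‖ = ‖gradient v r‖ := by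
    intro r
    rw [gradient, LinearIsometryEquiv.norm_map]
  have hvlip : ∀ p q, |v p - v q| ≤ M * ‖p - q‖ := by
    intro p q
    have bound : ∀ r ∈ (Set.univ : Set (EuclideanSpace ℝ (Fin n))),
        ‖fderiv ℝ v r‖ ≤ M := by
      intro r _
      rw [hgradnorm r]
      have := hM r
      have := abs_nonneg (v r)
      linarith
    have h := convex_univ.norm_image_sub_le_of_norm_hasFDerivWithin_le
      (fun r _ => (hvd r).hasFDerivAt.hasFDerivWithinAt) bound
      (Set.mem_univ q) (Set.mem_univ p)
    simpa [Real.norm_eq_abs] using h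
  have key := quadratic_core α hα Λ hΛ f hf hfb hf0 hfs hfy v (fun p => gradient v p)
    M H hH hM hM1 hvlip hHol
  exact key
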